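/- Let R be a ring, X a module with B = X^{⊥∞} such that {}^{⊥1}B ∩ B = Add(X) and the cotorsion pair ({}^{⊥1}B, B) is complete, and suppose every module in {}^{⊥1}B has projective dimension at most n. Then every projective R-module P admits an exact sequence 0 → P → Z_0 → Z_1 → ... → Z_{n-1} → Z_n → 0 with every Z_i ∈ Add(X). -/

import Mathlib

open CategoryTheory Limits CategoryTheory.Abelian

universe u


variable {R : Type u} [Ring R] [HasExt.{u} (ModuleCat.{u} R)]

/-- The short complex `M → N → N ⧸ range f` associated to an injective map. -/
noncomputable def stmt5.ses {M N : ModuleCat.{u} R} (f : M →ₗ[R] N) :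
    ShortComplex (ModuleCat.{u} R) :=
  ShortComplex.moduleCatMk (f : ↥M →ₗ[R] ↥N) (LinearMap.range f).mkQ
    (by ext x; simp [Submodule.Quotient.mk_eq_zero])

lemma stmt5.ses_shortExact {M N : ModuleCat.{u} R} (f : M →ₗ[R] N)
    (hf : Function.Injective f) : (stmt5.ses f).ShortExact := by
  refine ShortComplex.ShortExact.mk ?_ (mono_f := ?_) (epi_g := ?_)
  · exact (ShortComplex.moduleCat_exact_iff_range_eq_ker _).mpr
      (by
        show LinearMap.range (ModuleCat.ofHom f).hom = LinearMap.ker (ModuleCat.ofHom (LinearMap.range f).mkQ).hom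
        rw [show LinearMap.ker (ModuleCat.ofHom (LinearMap.range f).mkQ).hom = LinearMap.ker (LinearMap.range f).mkQ from rfl,
          Submodule.ker_mkQ]
        rfl)
  · exact (ModuleCat.mono_iff_injective _).mpr hf
  · exact (ModuleCat.epi_iff_surjective _).mpr (Submodule.mkQ_surjective _)

lemma stmt5.les_cov {S : ShortComplex (ModuleCat.{u} R)} (hS : S.ShortExact)
    (X : ModuleCat.{u} R) (m : ℕ)
    (h₂ : Subsingleton (Ext X S.X₂ m) ) (h₁ : Subsingleton (Ext X S.X₁ (m + 1))) :
    Subsingleton (Ext X S.X₃ m) := by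
  suffices h : ∀ x : Ext X S.X₃ m, x = 0 from ⟨fun a b => by rw [h a, h b]⟩
  intro x
  obtain ⟨x₂, hx₂⟩ := Ext.covariant_sequence_exact₃ X hS x rfl (Subsingleton.elim _ 0)
  rw [← hx₂, Subsingleton.elim x₂ 0, Ext.zero_comp]

lemma stmt5.les_contra {S : ShortComplex (ModuleCat.{u} R)} (hS : S.ShortExact)
    (Y : ModuleCat.{u} R)
    (h₁ : Subsingleton (Ext S.X₁ Y 1)) (h₃ : Subsingleton (Ext S.X₃ Y 1)) :
    Subsingleton (Ext S.X₂ Y 1) := by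
  suffices h : ∀ x : Ext S.X₂ Y 1, x = 0 from ⟨fun a b => by rw [h a, h b]⟩
  intro x
  obtain ⟨x₁, hx₁⟩ := Ext.contravariant_sequence_exact₂ hS Y x (Subsingleton.elim _ 0)
  rw [← hx₁, Subsingleton.elim x₁ 0, Ext.comp_zero]


/-- Let `X` be a module with `B = X^{⊥∞}`, `^{⊥1}B ∩ B = Add(X)`, the
cotorsion pair `(^{⊥1}B, B)` complete, and suppose every module in `^{⊥1}B` has projective
dimension at most `n`.  Then every projective `R`-module `P` admits an exact sequence
`0 → P → Z_0 → Z_1 → ... → Z_{n-1} → Z_n → 0` with every `Z_i ∈ Add(X)`. -/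
theorem stmt5 {R : Type u} [Ring R] [HasExt.{u} (ModuleCat.{u} R)]
    (n : ℕ) (X : ModuleCat.{u} R)
    (B AddX perp1 : ModuleCat.{u} R → Prop)
    (hBdef : ∀ N, B N ↔ ∀ i : ℕ, 0 < i → Subsingleton (Ext X N i))
    (hAdd : ∀ Y, AddX Y ↔ ∃ (ι : Type u) (s : Y →ₗ[R] (ι →₀ ↥X)) (p : (ι →₀ ↥X) →ₗ[R] Y),
      p.comp s = LinearMap.id)
    (hperp1 : ∀ Y, perp1 Y ↔ ∀ C, B C → Subsingleton (Ext Y C 1))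
    (hker : ∀ Y, (perp1 Y ∧ B Y) ↔ AddX Y)
    (hpreenv : ∀ M : ModuleCat.{u} R, ∃ (N : ModuleCat.{u} R) (f : M →ₗ[R] N),
      Function.Injective f ∧ B N ∧ perp1 (ModuleCat.of R (↥N ⧸ LinearMap.range f)))
    (hprecov : ∀ M : ModuleCat.{u} R, ∃ (P : ModuleCat.{u} R) (g : P →ₗ[R] M),
      Function.Surjective g ∧ perp1 P ∧ B (ModuleCat.of R (LinearMap.ker g)))
    (hpd : ∀ Y, perp1 Y → ∀ (N : ModuleCat.{u} R) (i : ℕ), n < i → Subsingleton (Ext Y N i)) :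
    ∀ P : ModuleCat.{u} R, Projective P →
      ∃ (Z : ℕ → ModuleCat.{u} R) (d : ∀ j : ℕ, Z j →ₗ[R] Z (j + 1)) (f : P →ₗ[R] Z 0),
        (∀ j ≤ n, AddX (Z j)) ∧ Function.Injective f ∧
        (0 < n → Function.Exact f (d 0)) ∧
        (∀ j : ℕ, j + 2 ≤ n → Function.Exact (d j) (d (j + 1))) ∧
        (0 < n → Function.Surjective (d (n - 1))) ∧
        (n = 0 → Function.Surjective f) := by
  choose NN e he hBN hC using hpreenv
  -- X itself is in Add X, hence in perp1
  have hAX : AddX X := by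
    rw [hAdd]
    refine ⟨PUnit, Finsupp.lsingle PUnit.unit, Finsupp.lapply PUnit.unit, ?_⟩
    ext x
    simp
  have hpX : perp1 X := ((hker X).mpr hAX).1
  -- the main induction
  have key : ∀ (k : ℕ) (M : ModuleCat.{u} R), perp1 M →
      (∀ i : ℕ, 0 < i → Subsingleton (Ext X M (i + k))) →
      ∃ (Z : ℕ → ModuleCat.{u} R) (d : ∀ j : ℕ, Z j →ₗ[R] Z (j + 1)) (f : ↥M →ₗ[R] ↥(Z 0)),
        (∀ j ≤ k, AddX (Z j)) ∧ Function.Injective f ∧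
        (0 < k → Function.Exact f (d 0)) ∧
        (∀ j : ℕ, j + 2 ≤ k → Function.Exact (d j) (d (j + 1))) ∧
        (0 < k → Function.Surjective (d (k - 1))) ∧
        (k = 0 → Function.Surjective f) := by
    intro k
    induction k with
    | zero =>
      intro M hM hinv
      refine ⟨fun _ => M, fun _ => LinearMap.id, LinearMap.id, ?_, fun a b h => h,
        by omega, fun j hj => by omega, by omega, fun _ y => ⟨y, rfl⟩⟩
      intro j _
      exact (hker M).mp ⟨hM, (hBdef M).mpr (fun i hi => hinv i hi)⟩
    | succ k ih =>
      intro M hM hinv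
      have hS : (stmt5.ses (e M)).ShortExact := stmt5.ses_shortExact _ (he M)
      -- invariant for the cokernel
      have hinvC : ∀ i : ℕ, 0 < i →
          Subsingleton (Ext X (ModuleCat.of R (↥(NN M) ⧸ LinearMap.range (e M))) (i + k)) := by
        intro i hi
        exact stmt5.les_cov hS X (i + k)
          ((hBdef (NN M)).mp (hBN M) (i + k) (by omega))
          (hinv i hi)
      obtain ⟨Z', d', f', hAdd', hinj', hex0', hexs', hsurj', hzero'⟩ :=
        ih (ModuleCat.of R (↥(NN M) ⧸ LinearMap.range (e M))) (hC M) hinvC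
      -- assemble
      refine ⟨fun j => Nat.casesOn j (NN M) Z',
        fun j => Nat.casesOn (motive := fun j =>
            ↥(Nat.casesOn j (NN M) Z' : ModuleCat.{u} R) →ₗ[R]
            ↥(Nat.casesOn (j+1) (NN M) Z' : ModuleCat.{u} R)) j
          (f'.comp (LinearMap.range (e M)).mkQ) (fun j => d' j),
        e M, ?_, he M, ?_, ?_, ?_, by omega⟩
      · -- Add X
        intro j hj
        cases j with
        | zero =>
          refine (hker (NN M)).mp ⟨?_, hBN M⟩
          rw [hperp1]
          intro C' hC'
          exact stmt5.les_contra hS C'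
            ((hperp1 M).mp hM C' hC')
            ((hperp1 _).mp (hC M) C' hC')
        | succ j => exact hAdd' j (by omega)
      · -- exactness at Z 0
        intro _
        exact (Function.Injective.comp_exact_iff_exact hinj').mpr
          (LinearMap.exact_iff.mpr (Submodule.ker_mkQ _))
      · -- exactness in the middle
        intro j hj
        cases j with
        | zero =>
          exact (Function.Surjective.comp_exact_iff_exact
            (Submodule.mkQ_surjective _)).mpr (hex0' (by omega))
        | succ j => exact hexs' j (by omega)
      · -- surjectivity of the last map
        intro _
        cases k with
        | zero =>
          exact (hzero' rfl).comp (Submodule.mkQ_surjective _)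
        | succ k => exact hsurj' (by omega)
  intro P hP
  haveI := hP
  -- P is in perp1 since it is projective (retract of a special precover)
  have hpP : perp1 P := by
    rw [hperp1]
    intro C' hC'
    obtain ⟨Q, g, hg, hQ, -⟩ := hprecov P
    haveI : Epi (ModuleCat.ofHom g) := (ModuleCat.epi_iff_surjective _).mpr hg
    suffices h : ∀ x : Ext P C' 1, x = 0 from ⟨fun a b => by rw [h a, h b]⟩
    intro x
    have h1 : (Ext.mk₀ (Projective.factorThru (𝟙 P) (ModuleCat.ofHom g) ≫
        ModuleCat.ofHom g)).comp x (zero_add 1) = x := by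
      rw [Projective.factorThru_comp, Ext.mk₀_id_comp]
    have hsub : Subsingleton (Ext (ModuleCat.of R ↥Q) C' 1) := (hperp1 Q).mp hQ C' hC'
    rw [← h1, ← Ext.mk₀_comp_mk₀_assoc,
      hsub.elim ((Ext.mk₀ (ModuleCat.ofHom g)).comp x (zero_add 1)) 0,
      Ext.comp_zero]
  exact key n P hpP (fun i hi => hpd X hpX P (i + n) (by omega))
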